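/- If U_1 ~ Geometric(p), then conditionally on S_0 = r, the expected total marketing effort satisfies E[M | S_0 = r] = E[Y | S_0 = r] / p. -/

import Mathlib

open MeasureTheory ProbabilityTheory
open scoped ENNReal NNReal

/-- Layer-cake formula for `ℕ`-valued random variables. -/
lemma lintegral_nat_layer {Ω : Type*} [MeasurableSpace Ω] (μ : Measure Ω)
    (f : Ω → ℕ) (hf : Measurable f) :
    ∫⁻ ω, (f ω : ℝ≥0∞) ∂μ = ∑' m : ℕ, μ {ω | m + 1 ≤ f ω} := by
  have hms : ∀ m : ℕ, MeasurableSet {ω | m + 1 ≤ f ω} := by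
    intro m
    exact hf (Set.Ici (m + 1) : Set ℕ).to_countable.measurableSet
  have h1 : ∀ ω, (f ω : ℝ≥0∞)
      = ∑' m : ℕ, Set.indicator {ω | m + 1 ≤ f ω} (fun _ => (1 : ℝ≥0∞)) ω := by
    intro ω
    have : ∀ m : ℕ, Set.indicator {ω | m + 1 ≤ f ω} (fun _ => (1 : ℝ≥0∞)) ω
        = if m + 1 ≤ f ω then (1 : ℝ≥0∞) else 0 := by
      intro m; by_cases h : m + 1 ≤ f ω <;> simp [Set.indicator, h] <;> omega
    simp only [this]
    rw [tsum_eq_sum (s := Finset.range (f ω)) (by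
      intro m hm
      have : ¬ m + 1 ≤ f ω := by
        simp only [Finset.mem_range, not_lt] at hm; omega
      simp [this])]
    have hall : ∀ b ∈ Finset.range (f ω), (if b + 1 ≤ f ω then (1 : ℝ≥0∞) else 0) = 1 :=
      fun b hb => if_pos (Finset.mem_range.mp hb)
    rw [Finset.sum_congr rfl hall]
    simp
  calc ∫⁻ ω, (f ω : ℝ≥0∞) ∂μ
      = ∫⁻ ω, ∑' m : ℕ, Set.indicator {ω | m + 1 ≤ f ω} (fun _ => (1 : ℝ≥0∞)) ω ∂μ :=
        lintegral_congr h1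
    _ = ∑' m : ℕ, ∫⁻ ω, Set.indicator {ω | m + 1 ≤ f ω} (fun _ => (1 : ℝ≥0∞)) ω ∂μ :=
        lintegral_tsum (fun m => ((measurable_const.indicator (hms m)).aemeasurable))
    _ = ∑' m : ℕ, μ {ω | m + 1 ≤ f ω} := by
        refine tsum_congr fun m => ?_
        rw [lintegral_indicator (hms m)]
        simp

/-- **Marketing effort versus yield, geometric case, fixed pool.** With `r` clients whose
response times `U 0, …, U (r-1)` are i.i.d. `Geometric(p)` (`P(U s = n) = p q^{n-1}`,
`n ≥ 1`, `q = 1 - p`), `X n = #{s < r : U s = n}`, `T = min {n ≥ 1 : X n = 0}`,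
`Y = X 1 + ⋯ + X (T-1)` the total yield and
`M = ∑_{s < r} (U s · 1{U s < T} + T · 1{U s > T})` the total marketing effort:
`E[M | S₀ = r] = E[Y | S₀ = r] / p`. -/
theorem effort_eq_yield_div_p
    {Ω : Type*} [MeasurableSpace Ω] (μ : Measure Ω) [IsProbabilityMeasure μ]
    (p : ℝ) (hp : 0 < p ∧ p < 1) (q : ℝ) (hq : q = 1 - p)
    (r : ℕ)
    (U : ℕ → Ω → ℕ) (hUm : ∀ s, Measurable (U s))
    (hindep : iIndepFun U μ)
    (hU : ∀ s, ∀ n, 1 ≤ n → μ {ω | U s ω = n} = ENNReal.ofReal (p * q ^ (n - 1)))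
    (hU0 : ∀ s, μ {ω | U s ω = 0} = 0)
    (X : ℕ → Ω → ℕ)
    (hX : ∀ n ω, X n ω = ((Finset.range r).filter (fun s => U s ω = n)).card)
    (T : Ω → ℕ) (hT : ∀ ω, T ω = sInf {n | 1 ≤ n ∧ X n ω = 0})
    (Y : Ω → ℕ) (hY : ∀ ω, Y ω = ∑ n ∈ Finset.Ico 1 (T ω), X n ω)
    (M : Ω → ℕ)
    (hM : ∀ ω, M ω = ∑ s ∈ Finset.range r,
        (if 1 ≤ U s ω ∧ U s ω < T ω then U s ω else T ω)) :
    ∫ ω, (M ω : ℝ) ∂μ = (∫ ω, (Y ω : ℝ) ∂μ) / p := by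
  classical
  have hq0 : 0 ≤ q := by rw [hq]; linarith [hp.2]
  -- The defining set of `T` is nonempty.
  have hne : ∀ ω, {n | 1 ≤ n ∧ X n ω = 0}.Nonempty := by
    intro ω
    refine ⟨1 + ∑ s ∈ Finset.range r, U s ω, le_add_right le_rfl, ?_⟩
    rw [hX]
    rw [Finset.card_eq_zero, Finset.filter_eq_empty_iff]
    intro s hs heq
    have hle : U s ω ≤ ∑ t ∈ Finset.range r, U t ω :=
      Finset.single_le_sum (f := fun t => U t ω) (fun t _ => Nat.zero_le _) hs
    omega
  have hTmem : ∀ ω, 1 ≤ T ω ∧ X (T ω) ω = 0 := by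
    intro ω; rw [hT]; exact Nat.sInf_mem (hne ω)
  -- Characterization of `n ≤ T ω`.
  have hTge : ∀ ω n, n ≤ T ω ↔ ∀ k, 1 ≤ k → k < n → X k ω ≠ 0 := by
    intro ω n
    constructor
    · intro h k hk1 hkn hX0
      have : T ω ≤ k := by rw [hT]; exact Nat.sInf_le ⟨hk1, hX0⟩
      omega
    · intro h
      by_contra hlt
      push_neg at hlt
      exact h (T ω) (hTmem ω).1 hlt (hTmem ω).2
  -- No client responds exactly at time `T`.
  have hUneT : ∀ ω s, s < r → U s ω ≠ T ω := by
    intro ω s hs heq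
    have h0 := (hTmem ω).2
    rw [hX] at h0
    rw [Finset.card_eq_zero, Finset.filter_eq_empty_iff] at h0
    exact h0 (Finset.mem_range.mpr hs) heq
  -- Measurability of `X k`.
  have hXm : ∀ k, Measurable (X k) := by
    intro k
    have : X k = fun ω => ∑ s ∈ Finset.range r, (if U s ω = k then 1 else 0) := by
      funext ω; rw [hX, Finset.card_filter]
    rw [this]
    exact Finset.measurable_sum _ fun s _ =>
      (measurable_of_countable (fun m : ℕ => if m = k then 1 else 0)).comp (hUm s)
  -- Measurability of `T`.
  have hQm : ∀ n : ℕ, MeasurableSet {ω | ∀ k, 1 ≤ k → k < n → X k ω ≠ 0} := by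
    intro n
    have : {ω | ∀ k, 1 ≤ k → k < n → X k ω ≠ 0}
        = ⋂ (k : ℕ), ⋂ (_ : 1 ≤ k ∧ k < n), {ω | X k ω ≠ 0} := by
      ext ω; simp only [Set.mem_iInter, Set.mem_setOf_eq]; tauto
    rw [this]
    exact MeasurableSet.iInter fun k => MeasurableSet.iInter fun _ =>
      (hXm k (({0} : Set ℕ).to_countable.measurableSet)).compl
  have hTm : Measurable T := by
    apply measurable_to_countable'
    intro n
    have : T ⁻¹' {n} = {ω | ∀ k, 1 ≤ k → k < n → X k ω ≠ 0}
        \ {ω | ∀ k, 1 ≤ k → k < n + 1 → X k ω ≠ 0} := by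
      ext ω
      simp only [Set.mem_preimage, Set.mem_singleton_iff, Set.mem_diff, Set.mem_setOf_eq]
      constructor
      · rintro rfl
        refine ⟨(hTge ω (T ω)).mp le_rfl, fun h => ?_⟩
        have := (hTge ω (T ω + 1)).mpr h
        omega
      · rintro ⟨h1, h2⟩
        have ha : n ≤ T ω := (hTge ω n).mpr h1
        have hb : ¬ (n + 1 ≤ T ω) := fun hc => h2 ((hTge ω (n + 1)).mp hc)
        omega
    rw [this]
    exact ((hQm n).diff (hQm (n + 1)))
  -- Tail probabilities of `U s`.
  have hUtail : ∀ s m, μ {ω | m + 1 ≤ U s ω} = ENNReal.ofReal (q ^ m) := by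
    intro s m
    induction m with
    | zero =>
      have : {ω | 0 + 1 ≤ U s ω} = {ω | U s ω = 0}ᶜ := by
        ext ω; simp only [Set.mem_compl_iff, Set.mem_setOf_eq]; omega
      have hms0 : MeasurableSet {ω | U s ω = 0} :=
        hUm s (({0} : Set ℕ).to_countable.measurableSet)
      rw [this, measure_compl hms0 (measure_ne_top μ _)]
      simp [hU0 s]
    | succ m ih =>
      have hsplit : {ω | m + 1 ≤ U s ω} = {ω | m + 1 + 1 ≤ U s ω} ∪ {ω | U s ω = m + 1} := by
        ext ω; simp only [Set.mem_union, Set.mem_setOf_eq]; omega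
      have hdisj : Disjoint {ω | m + 1 + 1 ≤ U s ω} {ω | U s ω = m + 1} := by
        rw [Set.disjoint_left]; intro ω h1 h2
        simp only [Set.mem_setOf_eq] at h1 h2; omega
      have hadd : μ {ω | m + 1 + 1 ≤ U s ω} + μ {ω | U s ω = m + 1}
          = ENNReal.ofReal (q ^ m) := by
        rw [← ih, hsplit, measure_union hdisj
          (hUm s (({m + 1} : Set ℕ).to_countable.measurableSet))]
      have hval : μ {ω | U s ω = m + 1} = ENNReal.ofReal (p * q ^ m) := by
        simpa using hU s (m + 1) (by omega)
      rw [hval] at hadd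
      have hle' : p * q ^ m ≤ q ^ m := by
        nlinarith [pow_nonneg hq0 m, hp.1, hp.2]
      have : μ {ω | m + 1 + 1 ≤ U s ω}
          = ENNReal.ofReal (q ^ m) - ENNReal.ofReal (p * q ^ m) := by
        rw [← hadd]
        rw [ENNReal.add_sub_cancel_right (by simp)]
      rw [this, ← ENNReal.ofReal_sub _ (mul_nonneg hp.1.le (pow_nonneg hq0 m))]
      congr 1
      rw [hq]; ring
  -- Point mass in terms of tail.
  have hUpt : ∀ s m, μ {ω | U s ω = m + 1}
      = ENNReal.ofReal p * μ {ω | m + 1 ≤ U s ω} := by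
    intro s m
    rw [hUtail s m, ← ENNReal.ofReal_mul hp.1.le]
    simpa using hU s (m + 1) (by omega)
  -- The core independence identity.
  have hcore : ∀ s, s < r → ∀ m : ℕ,
      μ {ω | U s ω = m + 1 ∧ m + 1 ≤ T ω}
        = ENNReal.ofReal p * μ {ω | m + 1 ≤ U s ω ∧ m + 1 ≤ T ω} := by
    intro s hs m
    set n := m + 1 with hn
    -- the event depending only on the other clients
    set B : Set Ω :=
      {ω | ∀ k, 1 ≤ k → k < n → ∃ t ∈ (Finset.range r).erase s, U t ω = k} with hB
    -- On `{n ≤ U s}`, the event `{n ≤ T}` coincides with `B`.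
    have hXne : ∀ ω k, X k ω ≠ 0 ↔ ∃ t ∈ Finset.range r, U t ω = k := by
      intro ω k
      rw [hX, Finset.card_ne_zero, Finset.filter_nonempty_iff]
    have hkey : ∀ ω, n ≤ U s ω → (n ≤ T ω ↔ ω ∈ B) := by
      intro ω hUω
      rw [hTge]
      constructor
      · intro h k hk1 hkn
        obtain ⟨t, ht, htk⟩ := (hXne ω k).mp (h k hk1 hkn)
        refine ⟨t, Finset.mem_erase.mpr ⟨?_, ht⟩, htk⟩
        rintro rfl; omega
      · intro h k hk1 hkn
        obtain ⟨t, ht, htk⟩ := h k hk1 hkn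
        exact (hXne ω k).mpr ⟨t, Finset.mem_erase.mp ht |>.2, htk⟩
    have hset1 : {ω | U s ω = n ∧ n ≤ T ω} = {ω | U s ω = n} ∩ B := by
      ext ω
      simp only [Set.mem_inter_iff, Set.mem_setOf_eq]
      constructor
      · rintro ⟨h1, h2⟩; exact ⟨h1, (hkey ω h1.ge).mp h2⟩
      · rintro ⟨h1, h2⟩; exact ⟨h1, (hkey ω h1.ge).mpr h2⟩
    have hset2 : {ω | n ≤ U s ω ∧ n ≤ T ω} = {ω | n ≤ U s ω} ∩ B := by
      ext ω
      simp only [Set.mem_inter_iff, Set.mem_setOf_eq]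
      constructor
      · rintro ⟨h1, h2⟩; exact ⟨h1, (hkey ω h1).mp h2⟩
      · rintro ⟨h1, h2⟩; exact ⟨h1, (hkey ω h1).mpr h2⟩
    -- independence
    have hdisjST : Disjoint ({s} : Finset ℕ) ((Finset.range r).erase s) := by
      simp [Finset.disjoint_left]
    have hindep2 := hindep.indepFun_finset {s} ((Finset.range r).erase s) hdisjST hUm
    have hmul : ∀ E : Set ℕ,
        μ ({ω | U s ω ∈ E} ∩ B) = μ {ω | U s ω ∈ E} * μ B := by
      intro E
      have hsmem : s ∈ ({s} : Finset ℕ) := Finset.mem_singleton_self s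
      set s₁ : Set (({s} : Finset ℕ) → ℕ) := {v | v ⟨s, hsmem⟩ ∈ E} with hs₁
      set s₂ : Set (((Finset.range r).erase s : Finset ℕ) → ℕ) :=
        {v | ∀ k, 1 ≤ k → k < n → ∃ t, v t = k} with hs₂
      have := hindep2.measure_inter_preimage_eq_mul (s := s₁) (t := s₂)
        (Set.to_countable s₁).measurableSet (Set.to_countable s₂).measurableSet
      have hpre1 : (fun a (i : ({s} : Finset ℕ)) => U i a) ⁻¹' s₁ = {ω | U s ω ∈ E} := rfl
      have hpre2 : (fun a (i : ((Finset.range r).erase s : Finset ℕ)) => U i a) ⁻¹' s₂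
          = B := by
        ext ω
        simp only [Set.mem_preimage, hs₂, Set.mem_setOf_eq, hB]
        constructor
        · intro h k hk1 hkn
          obtain ⟨t, ht⟩ := h k hk1 hkn
          exact ⟨t, t.2, ht⟩
        · intro h k hk1 hkn
          obtain ⟨t, ht, htk⟩ := h k hk1 hkn
          exact ⟨⟨t, ht⟩, htk⟩
      rw [hpre1, hpre2] at this
      exact this
    have h1 : μ {ω | U s ω = n ∧ n ≤ T ω} = μ {ω | U s ω = n} * μ B := by
      rw [hset1]
      exact hmul {n}
    have h2 : μ {ω | n ≤ U s ω ∧ n ≤ T ω} = μ {ω | n ≤ U s ω} * μ B := by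
      rw [hset2]
      exact hmul (Set.Ici n)
    rw [h1, h2, hUpt s m, mul_assoc]
  -- Measurability of auxiliary per-client functions.
  have hGm : ∀ s, Measurable (fun ω => if 1 ≤ U s ω ∧ U s ω < T ω then U s ω else T ω) := by
    intro s
    have hpair : Measurable (fun ω => (U s ω, T ω)) := (hUm s).prodMk hTm
    exact (measurable_of_countable
      (fun x : ℕ × ℕ => if 1 ≤ x.1 ∧ x.1 < x.2 then x.1 else x.2)).comp hpair
  have hIm : ∀ s, Measurable
      (fun ω => (if 1 ≤ U s ω ∧ U s ω < T ω then (1 : ℝ≥0∞) else 0)) := by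
    intro s
    have hpair : Measurable (fun ω => (U s ω, T ω)) := (hUm s).prodMk hTm
    exact (measurable_of_countable
      (fun x : ℕ × ℕ => if 1 ≤ x.1 ∧ x.1 < x.2 then (1 : ℝ≥0∞) else 0)).comp hpair
  -- Lebesgue integral of each effort term.
  have hGlayer : ∀ s, s < r →
      ∫⁻ ω, ((if 1 ≤ U s ω ∧ U s ω < T ω then U s ω else T ω : ℕ) : ℝ≥0∞) ∂μ
        = ∑' m : ℕ, μ {ω | m + 1 ≤ U s ω ∧ m + 1 ≤ T ω} := by
    intro s hs
    rw [lintegral_nat_layer μ _ (hGm s)]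
    refine tsum_congr fun m => ?_
    -- the two sets agree outside the null set `{U s = 0}`
    have hae : ∀ᵐ ω ∂μ, U s ω ≠ 0 := by
      rw [ae_iff]
      convert hU0 s using 2
      ext ω; simp
    refine measure_congr ?_
    refine Filter.eventuallyEq_of_mem hae fun ω hω => ?_
    simp only [Set.mem_setOf_eq, eq_iff_iff]
    show (m + 1 ≤ if 1 ≤ U s ω ∧ U s ω < T ω then U s ω else T ω)
        ↔ (m + 1 ≤ U s ω ∧ m + 1 ≤ T ω)
    have hne' := hUneT ω s hs
    have hT1 := (hTmem ω).1
    have hω' : U s ω ≠ 0 := hω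
    by_cases h : 1 ≤ U s ω ∧ U s ω < T ω
    · rw [if_pos h]
      omega
    · rw [if_neg h]
      have hge : T ω ≤ U s ω := by
        rcases Nat.lt_or_ge (U s ω) (T ω) with h' | h'
        · exact absurd ⟨by omega, h'⟩ h
        · exact h'
      omega
  -- Lebesgue integral of each yield indicator.
  have hYind : ∀ s, s < r →
      ∫⁻ ω, (if 1 ≤ U s ω ∧ U s ω < T ω then (1 : ℝ≥0∞) else 0) ∂μ
        = ∑' m : ℕ, μ {ω | U s ω = m + 1 ∧ m + 1 ≤ T ω} := by
    intro s hs
    have hsetm : MeasurableSet {ω | 1 ≤ U s ω ∧ U s ω < T ω} := by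
      have hpair : Measurable (fun ω => (U s ω, T ω)) := (hUm s).prodMk hTm
      exact hpair ({x : ℕ × ℕ | 1 ≤ x.1 ∧ x.1 < x.2}.to_countable.measurableSet)
    have : (fun ω => if 1 ≤ U s ω ∧ U s ω < T ω then (1 : ℝ≥0∞) else 0)
        = Set.indicator {ω | 1 ≤ U s ω ∧ U s ω < T ω} (fun _ => (1 : ℝ≥0∞)) := by
      funext ω
      by_cases h : 1 ≤ U s ω ∧ U s ω < T ω <;> simp [Set.indicator, h]
    rw [this, lintegral_indicator hsetm]
    simp only [lintegral_const, one_mul, Measure.restrict_apply_univ]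
    -- decompose as a disjoint union over the value of `U s`
    have hunion : {ω | 1 ≤ U s ω ∧ U s ω < T ω}
        = ⋃ m : ℕ, {ω | U s ω = m + 1 ∧ m + 1 ≤ T ω} := by
      ext ω
      simp only [Set.mem_iUnion, Set.mem_setOf_eq]
      constructor
      · rintro ⟨h1, h2⟩
        exact ⟨U s ω - 1, by omega, by omega⟩
      · rintro ⟨m, h1, h2⟩
        have := hUneT ω s hs
        omega
    rw [hunion]
    rw [measure_iUnion ?_ ?_]
    · intro i j hij
      rw [Function.onFun, Set.disjoint_left]
      intro ω h1 h2
      simp only [Set.mem_setOf_eq] at h1 h2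
      omega
    · intro m
      have hpair : Measurable (fun ω => (U s ω, T ω)) := (hUm s).prodMk hTm
      exact hpair ({x : ℕ × ℕ | x.1 = m + 1 ∧ m + 1 ≤ x.2}.to_countable.measurableSet)
  -- Lebesgue integrals of `M` and `Y`.
  have hGme : ∀ s : ℕ, Measurable fun ω =>
      ((if 1 ≤ U s ω ∧ U s ω < T ω then U s ω else T ω : ℕ) : ℝ≥0∞) :=
    fun s => (measurable_of_countable (fun k : ℕ => (k : ℝ≥0∞))).comp (hGm s)
  have hMl : ∫⁻ ω, (M ω : ℝ≥0∞) ∂μ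
      = ∑ s ∈ Finset.range r, ∑' m : ℕ, μ {ω | m + 1 ≤ U s ω ∧ m + 1 ≤ T ω} := by
    have h1 : ∀ ω, (M ω : ℝ≥0∞) = ∑ s ∈ Finset.range r,
        ((if 1 ≤ U s ω ∧ U s ω < T ω then U s ω else T ω : ℕ) : ℝ≥0∞) := by
      intro ω; rw [hM]; push_cast; rfl
    rw [lintegral_congr h1, lintegral_finset_sum _ (fun s _ => hGme s)]
    exact Finset.sum_congr rfl fun s hs => hGlayer s (Finset.mem_range.mp hs)
  have hYl : ∫⁻ ω, (Y ω : ℝ≥0∞) ∂μ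
      = ∑ s ∈ Finset.range r, ∑' m : ℕ, μ {ω | U s ω = m + 1 ∧ m + 1 ≤ T ω} := by
    have h1 : ∀ ω, (Y ω : ℝ≥0∞) = ∑ s ∈ Finset.range r,
        (if 1 ≤ U s ω ∧ U s ω < T ω then (1 : ℝ≥0∞) else 0) := by
      intro ω
      have h2 : Y ω = ∑ s ∈ Finset.range r,
          (if 1 ≤ U s ω ∧ U s ω < T ω then 1 else 0) := by
        rw [hY]
        have : ∀ n ∈ Finset.Ico 1 (T ω), X n ω
            = ∑ s ∈ Finset.range r, (if U s ω = n then 1 else 0) := by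
          intro n _; rw [hX, Finset.card_filter]
        rw [Finset.sum_congr rfl this, Finset.sum_comm]
        refine Finset.sum_congr rfl fun s _ => ?_
        rw [Finset.sum_ite_eq (Finset.Ico 1 (T ω)) (U s ω) (fun _ => 1)]
        simp [Finset.mem_Ico]
      rw [h2]
      push_cast
      exact Finset.sum_congr rfl fun s _ => by
        by_cases h : 1 ≤ U s ω ∧ U s ω < T ω <;> simp [h]
    rw [lintegral_congr h1, lintegral_finset_sum _ (fun s _ => hIm s)]
    exact Finset.sum_congr rfl fun s hs => hYind s (Finset.mem_range.mp hs)
  -- The key proportionality at the level of Lebesgue integrals.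
  have hkey : ∫⁻ ω, (Y ω : ℝ≥0∞) ∂μ
      = ENNReal.ofReal p * ∫⁻ ω, (M ω : ℝ≥0∞) ∂μ := by
    rw [hMl, hYl, Finset.mul_sum]
    refine Finset.sum_congr rfl fun s hs => ?_
    rw [← ENNReal.tsum_mul_left]
    exact tsum_congr fun m => hcore s (Finset.mem_range.mp hs) m
  -- Measurability of `M` and `Y`.
  have hMm : Measurable M := by
    have : M = fun ω => ∑ s ∈ Finset.range r,
        (if 1 ≤ U s ω ∧ U s ω < T ω then U s ω else T ω) := funext hM
    rw [this]
    exact Finset.measurable_sum _ fun s _ => hGm s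
  have hYm : Measurable Y := by
    have : Y = fun ω => ∑ n ∈ Finset.Ico 1 (T ω), X n ω := funext hY
    apply measurable_to_countable'
    intro k
    have h2 : Y ⁻¹' {k} = ⋃ n : ℕ, (T ⁻¹' {n} ∩ {ω | ∑ j ∈ Finset.Ico 1 n, X j ω = k}) := by
      ext ω
      simp only [Set.mem_preimage, Set.mem_singleton_iff, Set.mem_iUnion, Set.mem_inter_iff,
        Set.mem_setOf_eq]
      constructor
      · intro h; exact ⟨T ω, rfl, by rw [← h, hY]⟩
      · rintro ⟨n, hn, hsum⟩; rw [hY, hn]; exact hsum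
    rw [h2]
    refine MeasurableSet.iUnion fun n => (hTm (Set.to_countable _).measurableSet).inter ?_
    have hms : MeasurableSet {ω | ∑ j ∈ Finset.Ico 1 n, X j ω = k} :=
      (Finset.measurable_sum _ fun j _ => hXm j) (({k} : Set ℕ).to_countable.measurableSet)
    exact hms
  -- Convert Bochner integrals to Lebesgue integrals.
  have hMr : Measurable fun ω => (M ω : ℝ) :=
    (measurable_of_countable (fun k : ℕ => (k : ℝ))).comp hMm
  have hYr : Measurable fun ω => (Y ω : ℝ) :=
    (measurable_of_countable (fun k : ℕ => (k : ℝ))).comp hYm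
  have hMint : ∫ ω, (M ω : ℝ) ∂μ = (∫⁻ ω, (M ω : ℝ≥0∞) ∂μ).toReal := by
    rw [integral_eq_lintegral_of_nonneg_ae
      (Filter.Eventually.of_forall fun ω => Nat.cast_nonneg (M ω))
      hMr.aestronglyMeasurable]
    congr 1
    exact lintegral_congr fun ω => ENNReal.ofReal_natCast (M ω)
  have hYint : ∫ ω, (Y ω : ℝ) ∂μ = (∫⁻ ω, (Y ω : ℝ≥0∞) ∂μ).toReal := by
    rw [integral_eq_lintegral_of_nonneg_ae
      (Filter.Eventually.of_forall fun ω => Nat.cast_nonneg (Y ω))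
      hYr.aestronglyMeasurable]
    congr 1
    exact lintegral_congr fun ω => ENNReal.ofReal_natCast (Y ω)
  rw [hMint, hYint, hkey, ENNReal.toReal_mul, ENNReal.toReal_ofReal hp.1.le,
    mul_comm, mul_div_assoc, div_self (ne_of_gt hp.1), mul_one]
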